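/- Let 0 < ε < 1, let p ≥ 1 and 1 ≤ k ≤ |C| be integers, and let X ⊆ C with |X| = k. Suppose that for every subset X' ⊆ C with |X'| = k, |X \ X'| ≤ p and |X' \ X| ≤ p, it holds that cost(X') > (1 − (1 + (1−ε)/(3+2/p)) · ε/k) · cost(X). Then cost(X) ≤ (1/(1−ε))² · (3 + 2/p)² · OPT_C, where OPT_C = min_{Y ⊆ C, |Y| = k} cost(Y). -/

import Mathlib

open scoped Classical

/-- The `k`-means cost of a (nonempty) finite set `X` of centers with respect to the
data set `D`: `cost(X) = ∑_{v ∈ D} min_{u ∈ X} ‖v − u‖²`. -/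
noncomputable def kmeansCost {l : ℕ} (D X : Finset (EuclideanSpace ℝ (Fin l))) : ℝ :=
  ∑ v ∈ D, sInf ((fun u => ‖v - u‖ ^ 2) '' (X : Set (EuclideanSpace ℝ (Fin l))))

open Finset
open scoped RealInnerProductSpace

set_option maxHeartbeats 1000000

lemma km_exists_nearest {l : ℕ} (Y : Finset (EuclideanSpace ℝ (Fin l))) (hY : Y.Nonempty) :
    ∃ a : EuclideanSpace ℝ (Fin l) → EuclideanSpace ℝ (Fin l),
      ∀ v, a v ∈ Y ∧ ∀ u ∈ Y, ‖v - a v‖ ^ 2 ≤ ‖v - u‖ ^ 2 := by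
  have h := fun v : EuclideanSpace ℝ (Fin l) =>
    Y.exists_min_image (fun u => ‖v - u‖ ^ 2) hY
  choose a h1 h2 using h
  exact ⟨a, fun v => ⟨h1 v, h2 v⟩⟩

lemma km_cost_eq {l : ℕ} (D Y : Finset (EuclideanSpace ℝ (Fin l)))
    (a : EuclideanSpace ℝ (Fin l) → EuclideanSpace ℝ (Fin l))
    (ha : ∀ v, a v ∈ Y ∧ ∀ u ∈ Y, ‖v - a v‖ ^ 2 ≤ ‖v - u‖ ^ 2) :
    kmeansCost D Y = ∑ v ∈ D, ‖v - a v‖ ^ 2 := by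
  unfold kmeansCost
  refine Finset.sum_congr rfl fun v _ => ?_
  refine IsLeast.csInf_eq ⟨⟨a v, (ha v).1, rfl⟩, ?_⟩
  rintro y ⟨u, hu, rfl⟩
  exact (ha v).2 u hu

lemma km_cost_le_assign {l : ℕ} (D Y : Finset (EuclideanSpace ℝ (Fin l)))
    (f : EuclideanSpace ℝ (Fin l) → EuclideanSpace ℝ (Fin l))
    (hf : ∀ v ∈ D, f v ∈ Y) :
    kmeansCost D Y ≤ ∑ v ∈ D, ‖v - f v‖ ^ 2 := by
  unfold kmeansCost
  refine Finset.sum_le_sum fun v hv => ?_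
  refine csInf_le ⟨0, ?_⟩ ⟨f v, hf v hv, rfl⟩
  rintro y ⟨u, hu, rfl⟩
  positivity

lemma km_cost_nonneg {l : ℕ} (D Y : Finset (EuclideanSpace ℝ (Fin l))) :
    0 ≤ kmeansCost D Y := by
  unfold kmeansCost
  refine Finset.sum_nonneg fun v _ => ?_
  rcases Set.eq_empty_or_nonempty ((fun u => ‖v - u‖ ^ 2) '' (Y : Set _)) with h | h
  · simp [h, Real.sInf_empty]
  · exact le_csInf h (by rintro y ⟨u, hu, rfl⟩; positivity)

lemma km_partition {γ β : Type*} [DecidableEq β] (t : Finset γ) :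
    ∀ (s : Finset β) (d : γ → ℕ), (∑ y ∈ t, d y ≤ s.card) →
    ∃ f : γ → Finset β, (∀ y ∈ t, f y ⊆ s ∧ (f y).card = d y) ∧
      ∀ y ∈ t, ∀ y' ∈ t, y ≠ y' → Disjoint (f y) (f y') := by
  classical
  induction t using Finset.cons_induction with
  | empty => intro s d _; exact ⟨fun _ => ∅, by simp, by simp⟩
  | cons a t' hat ih =>
    intro s d hsum
    rw [Finset.sum_cons] at hsum
    obtain ⟨A, hAs, hAcard⟩ := Finset.exists_subset_card_eq
      (le_trans (Nat.le_add_right _ _) hsum)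
    have h2 : ∑ y ∈ t', d y ≤ (s \ A).card := by
      rw [Finset.card_sdiff_of_subset hAs, hAcard]
      omega
    obtain ⟨f', hf'1, hf'2⟩ := ih (s \ A) d h2
    refine ⟨Function.update f' a A, ?_, ?_⟩
    · intro y hy
      rcases Finset.mem_cons.mp hy with rfl | hy'
      · simp [Function.update_self, hAs, hAcard]
      · have hne : y ≠ a := by rintro rfl; exact hat hy'
        rw [Function.update_of_ne hne]
        exact ⟨(hf'1 y hy').1.trans (Finset.sdiff_subset), (hf'1 y hy').2⟩
    · have hdA : ∀ y' ∈ t', Disjoint A (f' y') := fun y' hy2 =>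
        ((Finset.sdiff_disjoint.mono_left (hf'1 y' hy2).1).symm)
      intro y hy y' hy' hne
      rcases Finset.mem_cons.mp hy with rfl | hy1 <;>
        rcases Finset.mem_cons.mp hy' with rfl | hy2
      · exact absurd rfl hne
      · have hne2 : y' ≠ y := fun h => hat (h ▸ hy2)
        rw [Function.update_self, Function.update_of_ne hne2]
        exact hdA y' hy2
      · have hne2 : y ≠ y' := fun h => hat (h ▸ hy1)
        rw [Function.update_self, Function.update_of_ne hne2]
        exact (hdA y hy1).symm
      · have h1 : y ≠ a := fun h => hat (h ▸ hy1)
        have h2' : y' ≠ a := fun h => hat (h ▸ hy2)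
        rw [Function.update_of_ne h1, Function.update_of_ne h2']
        exact hf'2 y hy1 y' hy2 hne

lemma km_centroid_identity {l : ℕ} (N : Finset (EuclideanSpace ℝ (Fin l)))
    (hN : N.Nonempty) (u : EuclideanSpace ℝ (Fin l)) :
    ∑ v ∈ N, ‖v - u‖ ^ 2 =
      (∑ v ∈ N, ‖v - (N.card : ℝ)⁻¹ • ∑ w ∈ N, w‖ ^ 2)
        + (N.card : ℝ) * ‖(N.card : ℝ)⁻¹ • (∑ w ∈ N, w) - u‖ ^ 2 := by
  set μ : EuclideanSpace ℝ (Fin l) := (N.card : ℝ)⁻¹ • ∑ w ∈ N, w with hμdef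
  have hc : (N.card : ℝ) ≠ 0 := Nat.cast_ne_zero.mpr (Finset.card_ne_zero_of_mem hN.choose_spec)
  have hsum0 : ∑ v ∈ N, (v - μ) = 0 := by
    rw [Finset.sum_sub_distrib, Finset.sum_const, sub_eq_zero, hμdef]
    rw [(Nat.cast_smul_eq_nsmul ℝ _ _).symm, smul_inv_smul₀ hc]
  have hdecomp : ∀ v : EuclideanSpace ℝ (Fin l),
      ‖v - u‖ ^ 2 = ‖v - μ‖ ^ 2 + 2 * ⟪v - μ, μ - u⟫ + ‖μ - u‖ ^ 2 := by
    intro v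
    have : v - u = (v - μ) + (μ - u) := by abel
    rw [this, norm_add_sq_real]
  calc ∑ v ∈ N, ‖v - u‖ ^ 2
      = ∑ v ∈ N, (‖v - μ‖ ^ 2 + 2 * ⟪v - μ, μ - u⟫ + ‖μ - u‖ ^ 2) := by
        exact Finset.sum_congr rfl fun v _ => hdecomp v
    _ = (∑ v ∈ N, ‖v - μ‖ ^ 2) + 2 * ⟪∑ v ∈ N, (v - μ), μ - u⟫
          + (N.card : ℝ) * ‖μ - u‖ ^ 2 := by
        rw [Finset.sum_add_distrib, Finset.sum_add_distrib, sum_inner]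
        rw [Finset.sum_const, nsmul_eq_mul, ← Finset.mul_sum]
    _ = _ := by rw [hsum0, inner_zero_left]; ring

lemma km_cluster_S {l : ℕ} (N : Finset (EuclideanSpace ℝ (Fin l))) (hN : N.Nonempty)
    (o μ : EuclideanSpace ℝ (Fin l)) (hμ : μ = (N.card : ℝ)⁻¹ • ∑ w ∈ N, w) :
    ∑ v ∈ N, ‖v - μ‖ ^ 2 ≤ ∑ v ∈ N, ‖v - o‖ ^ 2 := by
  have h := km_centroid_identity N hN o
  rw [← hμ] at h
  have h2 : 0 ≤ (N.card : ℝ) * ‖μ - o‖ ^ 2 := by positivity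
  linarith

lemma km_cluster_loss {l : ℕ} (N X : Finset (EuclideanSpace ℝ (Fin l))) (hN : N.Nonempty)
    (a : EuclideanSpace ℝ (Fin l) → EuclideanSpace ℝ (Fin l))
    (ha : ∀ v, a v ∈ X ∧ ∀ u ∈ X, ‖v - a v‖ ^ 2 ≤ ‖v - u‖ ^ 2)
    (μ : EuclideanSpace ℝ (Fin l)) (hμ : μ = (N.card : ℝ)⁻¹ • ∑ w ∈ N, w) :
    ∑ v ∈ N, (‖v - a μ‖ ^ 2 - ‖v - a v‖ ^ 2)
      ≤ 2 * ∑ v ∈ N, ‖v - μ‖ ^ 2 + 2 * ∑ v ∈ N, (‖v - μ‖ * ‖v - a v‖) := by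
  have hid := km_centroid_identity N hN (a μ)
  rw [← hμ] at hid
  have hptw : ∀ v ∈ N, ‖μ - a μ‖ ^ 2 ≤ (‖v - μ‖ + ‖v - a v‖) ^ 2 := by
    intro v _
    have h1 : ‖μ - a μ‖ ^ 2 ≤ ‖μ - a v‖ ^ 2 := (ha μ).2 (a v) (ha v).1
    have h2 : ‖μ - a v‖ ≤ ‖v - μ‖ + ‖v - a v‖ := by
      have : μ - a v = (μ - v) + (v - a v) := by abel
      rw [this]
      calc ‖(μ - v) + (v - a v)‖ ≤ ‖μ - v‖ + ‖v - a v‖ := norm_add_le _ _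
        _ = ‖v - μ‖ + ‖v - a v‖ := by rw [norm_sub_rev]
    have h3 : ‖μ - a v‖ ^ 2 ≤ (‖v - μ‖ + ‖v - a v‖) ^ 2 := by
      have hnn : 0 ≤ ‖μ - a v‖ := norm_nonneg _
      nlinarith
    linarith
  have hsmul : (N.card : ℝ) * ‖μ - a μ‖ ^ 2 ≤ ∑ v ∈ N, (‖v - μ‖ + ‖v - a v‖) ^ 2 := by
    have := Finset.card_nsmul_le_sum N (fun v => (‖v - μ‖ + ‖v - a v‖) ^ 2)
      (‖μ - a μ‖ ^ 2) hptw
    rwa [nsmul_eq_mul] at this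
  have hexp : ∑ v ∈ N, (‖v - μ‖ + ‖v - a v‖) ^ 2
      = ∑ v ∈ N, ‖v - μ‖ ^ 2 + 2 * ∑ v ∈ N, (‖v - μ‖ * ‖v - a v‖)
        + ∑ v ∈ N, ‖v - a v‖ ^ 2 := by
    rw [Finset.mul_sum, ← Finset.sum_add_distrib, ← Finset.sum_add_distrib]
    exact Finset.sum_congr rfl fun v _ => by ring
  have hsub : ∑ v ∈ N, (‖v - a μ‖ ^ 2 - ‖v - a v‖ ^ 2)
      = ∑ v ∈ N, ‖v - a μ‖ ^ 2 - ∑ v ∈ N, ‖v - a v‖ ^ 2 := Finset.sum_sub_distrib _ _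
  linarith

lemma km_swap {l : ℕ} (D C : Finset (EuclideanSpace ℝ (Fin l))) (ε : ℝ) (p k : ℕ)
    (X O : Finset (EuclideanSpace ℝ (Fin l)))
    (hXC : X ⊆ C) (hOC : O ⊆ C) (hXcard : X.card = k) (hkC : k ≤ C.card)
    (hlocal : ∀ X' : Finset (EuclideanSpace ℝ (Fin l)), X' ⊆ C → X'.card = k →
        (X \ X').card ≤ p → (X' \ X).card ≤ p →
        (1 - (1 + (1 - ε) / (3 + 2 / (p : ℝ))) * (ε / (k : ℝ))) * kmeansCost D X
          < kmeansCost D X')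
    (a ω η : EuclideanSpace ℝ (Fin l) → EuclideanSpace ℝ (Fin l))
    (ha : ∀ v, a v ∈ X ∧ ∀ u ∈ X, ‖v - a v‖ ^ 2 ≤ ‖v - u‖ ^ 2)
    (hω : ∀ v, ω v ∈ O ∧ ∀ u ∈ O, ‖v - ω v‖ ^ 2 ≤ ‖v - u‖ ^ 2)
    (hη : ∀ o, η o ∈ X)
    (A B : Finset (EuclideanSpace ℝ (Fin l)))
    (hAX : A ⊆ X) (hBO : B ⊆ O) (hABcard : A.card = B.card) (hAp : A.card ≤ p)
    (hc2 : ∀ o ∈ O, η o ∈ A → o ∈ B) :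
    -((1 + (1 - ε) / (3 + 2 / (p : ℝ))) * (ε / (k : ℝ))) * kmeansCost D X ≤
      ∑ v ∈ D, ((if ω v ∈ B then ‖v - ω v‖ ^ 2 - ‖v - a v‖ ^ 2 else 0)
        + (if a v ∈ A then ‖v - η (ω v)‖ ^ 2 - ‖v - a v‖ ^ 2 else 0)) := by
  classical
  have hAk : A.card ≤ k := hXcard ▸ Finset.card_le_card hAX
  set X₀ : Finset (EuclideanSpace ℝ (Fin l)) := (X \ A) ∪ B with hX₀
  have hX₀C : X₀ ⊆ C := by
    intro x hx
    rcases Finset.mem_union.mp hx with h | h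
    · exact hXC (Finset.mem_sdiff.mp h).1
    · exact hOC (hBO h)
  have hX₀card : X₀.card ≤ k := by
    calc X₀.card ≤ (X \ A).card + B.card := Finset.card_union_le _ _
    _ = k - A.card + A.card := by rw [Finset.card_sdiff_of_subset hAX, hXcard, hABcard]
    _ = k := by omega
  obtain ⟨X', hX₀X', hX'C, hX'card⟩ :=
    Finset.exists_subsuperset_card_eq hX₀C hX₀card hkC
  have hXdA : X \ A ⊆ X' := fun x hx => hX₀X' (Finset.mem_union_left _ hx)
  have h1 : (X \ X').card ≤ p := by
    refine le_trans (Finset.card_le_card ?_) hAp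
    intro x hx
    rcases Finset.mem_sdiff.mp hx with ⟨hxX, hxX'⟩
    by_contra hxA
    exact hxX' (hXdA (Finset.mem_sdiff.mpr ⟨hxX, hxA⟩))
  have h2 : (X' \ X).card ≤ p := by
    have hsub : X \ A ⊆ X' ∩ X := fun x hx =>
      Finset.mem_inter.mpr ⟨hXdA hx, (Finset.mem_sdiff.mp hx).1⟩
    have h3 : k - A.card ≤ (X' ∩ X).card := by
      have := Finset.card_le_card hsub
      rwa [Finset.card_sdiff_of_subset hAX, hXcard] at this
    have h4 : (X' ∩ X).card + (X' \ X).card = k := by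
      rw [Finset.card_inter_add_card_sdiff, hX'card]
    omega
  have hlt := hlocal X' hX'C hX'card h1 h2
  set g : EuclideanSpace ℝ (Fin l) → EuclideanSpace ℝ (Fin l) :=
    fun v => if ω v ∈ B then ω v else if a v ∈ A then η (ω v) else a v with hg
  have hgX' : ∀ v ∈ D, g v ∈ X' := by
    intro v _
    by_cases hB : ω v ∈ B
    · simp only [hg, if_pos hB]
      exact hX₀X' (Finset.mem_union_right _ hB)
    · by_cases hA : a v ∈ A
      · simp only [hg, if_neg hB, if_pos hA]
        refine hXdA (Finset.mem_sdiff.mpr ⟨(hη (ω v)), fun hmem => ?_⟩)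
        exact hB (hc2 (ω v) (hω v).1 hmem)
      · simp only [hg, if_neg hB, if_neg hA]
        exact hXdA (Finset.mem_sdiff.mpr ⟨(ha v).1, hA⟩)
  have hcostX' : kmeansCost D X' ≤ ∑ v ∈ D, ‖v - g v‖ ^ 2 :=
    km_cost_le_assign D X' g hgX'
  have hT : kmeansCost D X = ∑ v ∈ D, ‖v - a v‖ ^ 2 := km_cost_eq D X a ha
  have hptwise : ∀ v ∈ D, ‖v - g v‖ ^ 2 - ‖v - a v‖ ^ 2 ≤
      (if ω v ∈ B then ‖v - ω v‖ ^ 2 - ‖v - a v‖ ^ 2 else 0)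
        + (if a v ∈ A then ‖v - η (ω v)‖ ^ 2 - ‖v - a v‖ ^ 2 else 0) := by
    intro v _
    have hψ : ‖v - a v‖ ^ 2 ≤ ‖v - η (ω v)‖ ^ 2 := (ha v).2 _ (hη (ω v))
    by_cases hB : ω v ∈ B
    · simp only [hg, if_pos hB]
      by_cases hA : a v ∈ A <;> simp [hA] <;> linarith
    · by_cases hA : a v ∈ A
      · simp only [hg, if_neg hB, if_pos hA, if_pos hA]
        simp
      · simp only [hg, if_neg hB, if_neg hA]
        simp
  have hsum : ∑ v ∈ D, ‖v - g v‖ ^ 2 ≤ kmeansCost D X +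
      ∑ v ∈ D, ((if ω v ∈ B then ‖v - ω v‖ ^ 2 - ‖v - a v‖ ^ 2 else 0)
        + (if a v ∈ A then ‖v - η (ω v)‖ ^ 2 - ‖v - a v‖ ^ 2 else 0)) := by
    rw [hT, ← Finset.sum_add_distrib]
    refine Finset.sum_le_sum fun v hv => ?_
    have := hptwise v hv
    linarith
  nlinarith [hlt, hcostX', hsum]

lemma km_sum_ind {l : ℕ} (D B : Finset (EuclideanSpace ℝ (Fin l)))
    (m : EuclideanSpace ℝ (Fin l) → EuclideanSpace ℝ (Fin l))
    (h : EuclideanSpace ℝ (Fin l) → ℝ) :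
    ∑ v ∈ D, (if m v ∈ B then h v else 0)
      = ∑ o ∈ B, ∑ v ∈ D, (if m v = o then h v else 0) := by
  rw [Finset.sum_comm]
  refine Finset.sum_congr rfl fun v _ => ?_
  exact (Finset.sum_ite_eq B (m v) (fun _ => h v)).symm

lemma km_perx {l : ℕ} (D C : Finset (EuclideanSpace ℝ (Fin l))) (ε : ℝ) (p k : ℕ)
    (X O : Finset (EuclideanSpace ℝ (Fin l)))
    (hε0 : 0 < ε) (hε1 : ε < 1) (hp : 1 ≤ p) (hk : 1 ≤ k)
    (hXC : X ⊆ C) (hOC : O ⊆ C) (hXcard : X.card = k) (hkC : k ≤ C.card)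
    (hlocal : ∀ X' : Finset (EuclideanSpace ℝ (Fin l)), X' ⊆ C → X'.card = k →
        (X \ X').card ≤ p → (X' \ X).card ≤ p →
        (1 - (1 + (1 - ε) / (3 + 2 / (p : ℝ))) * (ε / (k : ℝ))) * kmeansCost D X
          < kmeansCost D X')
    (a ω η : EuclideanSpace ℝ (Fin l) → EuclideanSpace ℝ (Fin l))
    (ha : ∀ v, a v ∈ X ∧ ∀ u ∈ X, ‖v - a v‖ ^ 2 ≤ ‖v - u‖ ^ 2)
    (hω : ∀ v, ω v ∈ O ∧ ∀ u ∈ O, ‖v - ω v‖ ^ 2 ≤ ‖v - u‖ ^ 2)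
    (hη : ∀ o, η o ∈ X)
    (x : EuclideanSpace ℝ (Fin l)) (hxH : x ∈ O.image η)
    (fx : Finset (EuclideanSpace ℝ (Fin l)))
    (hfx1 : fx ⊆ X \ O.image η)
    (hfx2 : fx.card = (O.filter (fun o => η o = x)).card - 1) :
    -((1 + (1 - ε) / (3 + 2 / (p : ℝ))) * (ε / (k : ℝ)))
        * ((O.filter (fun o => η o = x)).card : ℝ) * kmeansCost D X ≤
      (∑ o ∈ O.filter (fun o => η o = x),
          ∑ v ∈ D, (if ω v = o then ‖v - ω v‖ ^ 2 - ‖v - a v‖ ^ 2 else 0))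
        + (1 + 1 / (p : ℝ)) * ∑ x' ∈ insert x fx,
            ∑ v ∈ D, (if a v = x' then ‖v - η (ω v)‖ ^ 2 - ‖v - a v‖ ^ 2 else 0) := by
  classical
  set α : ℝ := (1 + (1 - ε) / (3 + 2 / (p : ℝ))) * (ε / (k : ℝ)) with hα
  set T : ℝ := kmeansCost D X with hTdef
  set B : Finset (EuclideanSpace ℝ (Fin l)) := O.filter (fun o => η o = x) with hB
  set g1 : EuclideanSpace ℝ (Fin l) → ℝ :=
    fun o => ∑ v ∈ D, (if ω v = o then ‖v - ω v‖ ^ 2 - ‖v - a v‖ ^ 2 else 0) with hg1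
  set g2 : EuclideanSpace ℝ (Fin l) → ℝ :=
    fun x' => ∑ v ∈ D, (if a v = x' then ‖v - η (ω v)‖ ^ 2 - ‖v - a v‖ ^ 2 else 0) with hg2
  have hT0 : 0 ≤ T := km_cost_nonneg D X
  have hsp : (0 : ℝ) < 3 + 2 / (p : ℝ) := by
    have : (0:ℝ) ≤ 2 / (p:ℝ) := by positivity
    linarith
  have hα0 : 0 ≤ α := by
    have h1 : (0:ℝ) ≤ (1 - ε) / (3 + 2 / (p : ℝ)) := by
      apply div_nonneg <;> linarith
    have h2 : (0:ℝ) ≤ ε / (k : ℝ) := by positivity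
    nlinarith
  have hg2nonneg : ∀ x', 0 ≤ g2 x' := by
    intro x'
    refine Finset.sum_nonneg fun v _ => ?_
    by_cases h : a v = x'
    · simp only [hg2, if_pos h]
      have := (ha v).2 (η (ω v)) (hη (ω v))
      linarith
    · simp [hg2, h]
  have hd1 : 1 ≤ B.card := by
    obtain ⟨o, ho, hox⟩ := Finset.mem_image.mp hxH
    exact Finset.card_pos.mpr ⟨o, Finset.mem_filter.mpr ⟨ho, hox⟩⟩
  have hBO : B ⊆ O := Finset.filter_subset _ _
  have hxX : x ∈ X := by
    obtain ⟨o, _, hox⟩ := Finset.mem_image.mp hxH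
    exact hox ▸ hη o
  have hfxX : fx ⊆ X := hfx1.trans (Finset.sdiff_subset)
  have hxnotfx : x ∉ fx := by
    intro hmem
    exact (Finset.mem_sdiff.mp (hfx1 hmem)).2 hxH
  have hp0 : (0:ℝ) < (p:ℝ) := by exact_mod_cast hp
  have h1p : (0:ℝ) ≤ 1 / (p:ℝ) := by positivity
  by_cases hcase : B.card ≤ p
  · -- single big swap
    set A : Finset (EuclideanSpace ℝ (Fin l)) := insert x fx with hA
    have hAX : A ⊆ X := by
      intro y hy
      rcases Finset.mem_insert.mp hy with rfl | hy'
      · exact hxX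
      · exact hfxX hy'
    have hAcard : A.card = B.card := by
      rw [hA, Finset.card_insert_of_notMem hxnotfx, hfx2]
      omega
    have hc2 : ∀ o ∈ O, η o ∈ A → o ∈ B := by
      intro o ho hmem
      rcases Finset.mem_insert.mp hmem with h | h
      · exact Finset.mem_filter.mpr ⟨ho, h⟩
      · exact absurd (Finset.mem_image_of_mem η ho) (Finset.mem_sdiff.mp (hfx1 h)).2
    have hsw := km_swap D C ε p k X O hXC hOC hXcard hkC hlocal a ω η ha hω hη
      A B hAX hBO hAcard (hAcard ▸ hcase) hc2
    rw [← hα, ← hTdef, Finset.sum_add_distrib, km_sum_ind D B ω, km_sum_ind D A a] at hsw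
    have hBd : (1:ℝ) ≤ (B.card : ℝ) := by exact_mod_cast hd1
    have hstep : -α * (B.card : ℝ) * T ≤ -α * T := by
      nlinarith [mul_nonneg (mul_nonneg hα0 hT0) (sub_nonneg.mpr hBd)]
    have hg2sum : 0 ≤ ∑ x' ∈ A, g2 x' := Finset.sum_nonneg fun x' _ => hg2nonneg x'
    have hfinal : ∑ x' ∈ A, g2 x' ≤ (1 + 1/(p:ℝ)) * ∑ x' ∈ A, g2 x' := by
      have := mul_nonneg h1p hg2sum
      linarith
    calc -α * (B.card : ℝ) * T ≤ -α * T := hstep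
      _ ≤ (∑ o ∈ B, g1 o) + ∑ x' ∈ A, g2 x' := hsw
      _ ≤ (∑ o ∈ B, g1 o) + (1 + 1/(p:ℝ)) * ∑ x' ∈ A, g2 x' := by linarith
  · -- singleton swaps, averaged
    push_neg at hcase
    set m : ℕ := B.card - 1 with hm
    have hmp : p ≤ m := by omega
    have hm1 : 1 ≤ m := le_trans hp hmp
    have hmR : (0:ℝ) < (m:ℝ) := by exact_mod_cast hm1
    have hfxne : fx.Nonempty := Finset.card_pos.mp (by rw [hfx2]; omega)
    set G : ℝ := ∑ x' ∈ fx, g2 x' with hG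
    have hG0 : 0 ≤ G := Finset.sum_nonneg fun x' _ => hg2nonneg x'
    have hsingle : ∀ o ∈ B, ∀ x' ∈ fx, -α * T - g1 o ≤ g2 x' := by
      intro o ho x' hx'
      have hAX : ({x'} : Finset _) ⊆ X := by
        intro y hy; rw [Finset.mem_singleton] at hy; exact hy ▸ hfxX hx'
      have hBO' : ({o} : Finset _) ⊆ O := by
        intro y hy; rw [Finset.mem_singleton] at hy; exact hy ▸ hBO ho
      have hc2 : ∀ o' ∈ O, η o' ∈ ({x'} : Finset _) → o' ∈ ({o} : Finset _) := by
        intro o' ho' hmem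
        rw [Finset.mem_singleton] at hmem
        exact absurd (Finset.mem_image_of_mem η ho')
          (hmem ▸ (Finset.mem_sdiff.mp (hfx1 hx')).2)
      have hsw := km_swap D C ε p k X O hXC hOC hXcard hkC hlocal a ω η ha hω hη
        {x'} {o} hAX hBO' (by simp) (by simp [hp]) hc2
      rw [Finset.sum_add_distrib] at hsw
      have e1 : ∑ v ∈ D, (if ω v ∈ ({o} : Finset _) then ‖v - ω v‖ ^ 2 - ‖v - a v‖ ^ 2 else 0)
          = g1 o := by
        refine Finset.sum_congr rfl fun v _ => ?_
        simp [Finset.mem_singleton]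
      have e2 : ∑ v ∈ D, (if a v ∈ ({x'} : Finset _) then ‖v - η (ω v)‖ ^ 2 - ‖v - a v‖ ^ 2 else 0)
          = g2 x' := by
        refine Finset.sum_congr rfl fun v _ => ?_
        simp [Finset.mem_singleton]
      rw [← hα, ← hTdef, e1, e2] at hsw
      linarith
    have havg : ∀ o ∈ B, -α * T - g1 o ≤ (1/(m:ℝ)) * G := by
      intro o ho
      have hcard : fx.card • (-α * T - g1 o) ≤ G :=
        Finset.card_nsmul_le_sum fx _ _ (fun x' hx' => hsingle o ho x' hx')
      rw [hfx2, nsmul_eq_mul] at hcard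
      have h2 : -α * T - g1 o ≤ G / (m:ℝ) := by
        rw [le_div_iff₀ hmR, mul_comm]
        exact hcard
      rw [one_div_mul_eq_div]
      exact h2
    have hsumB : ∑ o ∈ B, (-α * T - g1 o) ≤ ∑ o ∈ B, (1/(m:ℝ)) * G :=
      Finset.sum_le_sum havg
    rw [Finset.sum_sub_distrib, Finset.sum_const, Finset.sum_const] at hsumB
    have hBm : (B.card : ℝ) = (m : ℝ) + 1 := by
      rw [hm]
      push_cast [Nat.cast_sub hd1]
      ring
    have hpm : (p:ℝ) ≤ (m:ℝ) := by exact_mod_cast hmp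
    have hmne : (m:ℝ) ≠ 0 := ne_of_gt hmR
    have hfrac : ((m:ℝ)+1) * (1/(m:ℝ)) ≤ 1 + 1/(p:ℝ) := by
      have e : ((m:ℝ)+1)*(1/(m:ℝ)) = 1 + 1/(m:ℝ) := by field_simp
      have h2 : 1/(m:ℝ) ≤ 1/(p:ℝ) := one_div_le_one_div_of_le hp0 hpm
      rw [e]
      linarith
    have hGA : G ≤ ∑ x' ∈ insert x fx, g2 x' := by
      rw [Finset.sum_insert hxnotfx]
      have := hg2nonneg x
      linarith
    have hcardsmul : ((B.card • (-α * T)) : ℝ) = (B.card : ℝ) * (-α * T) := by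
      rw [nsmul_eq_mul]
    have hcardsmul2 : ((B.card • ((1/(m:ℝ)) * G)) : ℝ) = (B.card : ℝ) * ((1/(m:ℝ)) * G) := by
      rw [nsmul_eq_mul]
    rw [hcardsmul, hcardsmul2] at hsumB
    have hkey : (B.card : ℝ) * ((1/(m:ℝ)) * G) ≤ (1 + 1/(p:ℝ)) * G := by
      rw [hBm]
      calc ((m:ℝ)+1) * ((1/(m:ℝ)) * G) = (((m:ℝ)+1) * (1/(m:ℝ))) * G := by ring
        _ ≤ (1 + 1/(p:ℝ)) * G := mul_le_mul_of_nonneg_right hfrac hG0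
    have h1pp : (0:ℝ) ≤ 1 + 1/(p:ℝ) := by positivity
    have hG2 : (1 + 1/(p:ℝ)) * G ≤ (1 + 1/(p:ℝ)) * ∑ x' ∈ insert x fx, g2 x' :=
      mul_le_mul_of_nonneg_left hGA h1pp
    calc -α * (B.card : ℝ) * T = (B.card : ℝ) * (-α * T) := by ring
      _ ≤ (∑ o ∈ B, g1 o) + (B.card : ℝ) * ((1/(m:ℝ)) * G) := by linarith
      _ ≤ (∑ o ∈ B, g1 o) + (1 + 1/(p:ℝ)) * ∑ x' ∈ insert x fx, g2 x' := by linarith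


lemma km_algebra (ε s u r : ℝ) (hε0 : 0 < ε) (hε1 : ε < 1) (hs3 : 3 < s)
    (hu0 : 0 ≤ u) (hr0 : 0 ≤ r)
    (hmain2 : (1 - (1 + (1-ε)/s) * ε) * u^2 ≤ s * r^2 + (s-1) * (r*u)) :
    u^2 ≤ (1/(1-ε))^2 * s^2 * r^2 := by
  have h1ε : (0:ℝ) < 1 - ε := by linarith
  have hs0 : (0:ℝ) < s := by linarith
  have hsne : s ≠ 0 := ne_of_gt hs0
  have hmain3 : (1-ε) * (s-ε) * u^2 ≤ s^2 * r^2 + s*(s-1)*(r*u) := by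
    have hmul := mul_le_mul_of_nonneg_left hmain2 hs0.le
    have hβ : s * ((1-ε)/s) = 1-ε := mul_div_cancel₀ _ hsne
    have e2 : s * ((1 - (1 + (1-ε)/s) * ε) * u^2) = (1-ε) * (s-ε) * u^2 := by
      linear_combination (-(ε*u^2)) * hβ
    have e3 : s * (s * r^2 + (s-1) * (r*u)) = s^2 * r^2 + s*(s-1)*(r*u) := by ring
    rw [e2, e3] at hmul
    exact hmul
  have hkey : (1-ε) * u ≤ s * r := by
    by_contra hcon
    push_neg at hcon
    have hsr0 : 0 ≤ s * r := mul_nonneg hs0.le hr0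
    have h5 : 0 < (1-ε) * u := lt_of_le_of_lt hsr0 hcon
    have hu0' : 0 < u := by nlinarith
    have hpos2 : 0 < (s-ε)*u + s*r :=
      add_pos_of_pos_of_nonneg (mul_pos (by linarith) hu0') hsr0
    have hprod : 0 < ((1-ε)*u - s*r) * ((s-ε)*u + s*r) :=
      mul_pos (by linarith) hpos2
    nlinarith [hmain3, hprod]
  have hsq : ((1-ε)*u)^2 ≤ (s*r)^2 := by
    have h6 : 0 ≤ (1-ε)*u := by positivity
    nlinarith [hkey, h6]
  have e4 : (1/(1-ε))^2 * s^2 * r^2 = (s*r)^2 / ((1-ε)^2) := by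
    field_simp
  rw [e4, le_div_iff₀ (by positivity)]
  nlinarith [hsq]

/-- if a size-`k` subset `X ⊆ C` is an approximate local optimum for the
`k`-means objective under swaps of at most `p` points (with improvement factor
`1 − (1 + (1−ε)/(3+2/p))·ε/k`), then
`cost(X) ≤ (1/(1−ε))² · (3 + 2/p)² · OPT_C`. -/
theorem kmeans_local_search_approx
    (l : ℕ) (D C : Finset (EuclideanSpace ℝ (Fin l))) (ε : ℝ) (p k : ℕ)
    (hε0 : 0 < ε) (hε1 : ε < 1) (hp : 1 ≤ p) (hk : 1 ≤ k) (hkC : k ≤ C.card)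
    (X : Finset (EuclideanSpace ℝ (Fin l))) (hXC : X ⊆ C) (hXcard : X.card = k)
    (hlocal : ∀ X' : Finset (EuclideanSpace ℝ (Fin l)), X' ⊆ C → X'.card = k →
        (X \ X').card ≤ p → (X' \ X).card ≤ p →
        (1 - (1 + (1 - ε) / (3 + 2 / (p : ℝ))) * (ε / (k : ℝ))) * kmeansCost D X
          < kmeansCost D X') :
    kmeansCost D X ≤
      (1 / (1 - ε)) ^ 2 * (3 + 2 / (p : ℝ)) ^ 2 *
        (C.powersetCard k).inf' (Finset.powersetCard_nonempty.mpr hkC)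
          (fun Y => kmeansCost D Y) := by
  classical
  obtain ⟨O, hOmem, hOeq⟩ := Finset.exists_mem_eq_inf'
    (Finset.powersetCard_nonempty.mpr hkC) (fun Y => kmeansCost D Y)
  rw [hOeq]
  obtain ⟨hOC, hOcard⟩ := Finset.mem_powersetCard.mp hOmem
  have hXne : X.Nonempty := Finset.card_pos.mp (by rw [hXcard]; omega)
  have hOne : O.Nonempty := Finset.card_pos.mp (by rw [hOcard]; omega)
  obtain ⟨a, ha⟩ := km_exists_nearest X hXne
  obtain ⟨ω, hω⟩ := km_exists_nearest O hOne
  set Ncl : EuclideanSpace ℝ (Fin l) → Finset (EuclideanSpace ℝ (Fin l)) :=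
    fun o => D.filter (fun v => ω v = o) with hNcl
  set μf : EuclideanSpace ℝ (Fin l) → EuclideanSpace ℝ (Fin l) :=
    fun o => if h : (Ncl o).Nonempty then ((Ncl o).card : ℝ)⁻¹ • ∑ w ∈ Ncl o, w else o
    with hμf
  set η : EuclideanSpace ℝ (Fin l) → EuclideanSpace ℝ (Fin l) :=
    fun o => a (μf o) with hηdef
  have hη : ∀ o, η o ∈ X := fun o => (ha (μf o)).1
  set H : Finset (EuclideanSpace ℝ (Fin l)) := O.image η with hH
  have hHX : H ⊆ X := by
    intro x hx
    obtain ⟨o, _, rfl⟩ := Finset.mem_image.mp hx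
    exact hη o
  have hdegpos : ∀ x ∈ H, 1 ≤ (O.filter (fun o => η o = x)).card := by
    intro x hx
    obtain ⟨o, ho, rfl⟩ := Finset.mem_image.mp hx
    exact Finset.card_pos.mpr ⟨o, Finset.mem_filter.mpr ⟨ho, rfl⟩⟩
  have hdegsum : ∑ x ∈ H, (O.filter (fun o => η o = x)).card = k := by
    rw [← hOcard]
    exact (Finset.card_eq_sum_card_fiberwise
      (fun o ho => Finset.mem_image_of_mem η ho)).symm
  have hsum2 : ∑ x ∈ H, ((O.filter (fun o => η o = x)).card - 1) ≤ (X \ H).card := by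
    have h1 : ∑ x ∈ H, ((O.filter (fun o => η o = x)).card - 1) + H.card = k := by
      calc ∑ x ∈ H, ((O.filter (fun o => η o = x)).card - 1) + H.card
          = ∑ x ∈ H, (((O.filter (fun o => η o = x)).card - 1) + 1) := by
            rw [Finset.sum_add_distrib, Finset.sum_const, smul_eq_mul, mul_one]
        _ = ∑ x ∈ H, (O.filter (fun o => η o = x)).card :=
            Finset.sum_congr rfl fun x hx => Nat.sub_add_cancel (hdegpos x hx)
        _ = k := hdegsum
    have h2 : H.card ≤ X.card := Finset.card_le_card hHX
    rw [Finset.card_sdiff_of_subset hHX, hXcard]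
    omega
  obtain ⟨f, hf1, hf2⟩ := km_partition H (X \ H)
    (fun x => (O.filter (fun o => η o = x)).card - 1) hsum2
  have hT : kmeansCost D X = ∑ v ∈ D, ‖v - a v‖ ^ 2 := km_cost_eq D X a ha
  have hS : kmeansCost D O = ∑ v ∈ D, ‖v - ω v‖ ^ 2 := km_cost_eq D O ω hω
  have hT0 : 0 ≤ kmeansCost D X := km_cost_nonneg D X
  have hS0 : 0 ≤ kmeansCost D O := km_cost_nonneg D O
  have hp0 : (0:ℝ) < (p:ℝ) := by exact_mod_cast hp
  have hk0 : (0:ℝ) < (k:ℝ) := by exact_mod_cast hk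
  -- summed per-x inequality
  have hsummed := Finset.sum_le_sum (fun x hx =>
    km_perx D C ε p k X O hε0 hε1 hp hk hXC hOC hXcard hkC hlocal
      a ω η ha hω hη x hx (f x) (hf1 x hx).1 (hf1 x hx).2)
  -- LHS of summed inequality
  have hLHS : ∑ x ∈ H, (-((1 + (1 - ε) / (3 + 2 / (p:ℝ))) * (ε / (k:ℝ)))
        * (((O.filter (fun o => η o = x)).card : ℝ)) * kmeansCost D X)
      = -((1 + (1 - ε) / (3 + 2 / (p:ℝ))) * (ε / (k:ℝ))) * (k:ℝ) * kmeansCost D X := by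
    have e1 : ∀ x ∈ H, -((1 + (1 - ε) / (3 + 2 / (p:ℝ))) * (ε / (k:ℝ)))
          * (((O.filter (fun o => η o = x)).card : ℝ)) * kmeansCost D X
        = (((O.filter (fun o => η o = x)).card : ℝ))
          * (-((1 + (1 - ε) / (3 + 2 / (p:ℝ))) * (ε / (k:ℝ))) * kmeansCost D X) := by
      intro x _; ring
    rw [Finset.sum_congr rfl e1, ← Finset.sum_mul]
    have e2 : ∑ x ∈ H, (((O.filter (fun o => η o = x)).card : ℝ)) = (k:ℝ) := by
      rw [← Nat.cast_sum, hdegsum]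
    rw [e2]; ring
  -- split RHS
  have hsplit : ∑ x ∈ H, ((∑ o ∈ O.filter (fun o => η o = x),
          ∑ v ∈ D, (if ω v = o then ‖v - ω v‖ ^ 2 - ‖v - a v‖ ^ 2 else 0))
        + (1 + 1 / (p : ℝ)) * ∑ x' ∈ insert x (f x),
            ∑ v ∈ D, (if a v = x' then ‖v - η (ω v)‖ ^ 2 - ‖v - a v‖ ^ 2 else 0))
      = (∑ x ∈ H, ∑ o ∈ O.filter (fun o => η o = x),
          ∑ v ∈ D, (if ω v = o then ‖v - ω v‖ ^ 2 - ‖v - a v‖ ^ 2 else 0))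
        + (1 + 1 / (p : ℝ)) * ∑ x ∈ H, ∑ x' ∈ insert x (f x),
            ∑ v ∈ D, (if a v = x' then ‖v - η (ω v)‖ ^ 2 - ‖v - a v‖ ^ 2 else 0) := by
    rw [Finset.sum_add_distrib, Finset.mul_sum]
  -- first term equals S - T
  have hterm1 : ∑ x ∈ H, ∑ o ∈ O.filter (fun o => η o = x),
        ∑ v ∈ D, (if ω v = o then ‖v - ω v‖ ^ 2 - ‖v - a v‖ ^ 2 else 0)
      = kmeansCost D O - kmeansCost D X := by
    rw [Finset.sum_fiberwise_of_maps_to (fun o ho => Finset.mem_image_of_mem η ho)]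
    rw [← km_sum_ind D O ω (fun v => ‖v - ω v‖ ^ 2 - ‖v - a v‖ ^ 2)]
    rw [hS, hT, ← Finset.sum_sub_distrib]
    exact Finset.sum_congr rfl fun v hv => if_pos (hω v).1
  -- second term bounded by total loss
  have hg2nonneg : ∀ x', (0:ℝ) ≤ ∑ v ∈ D,
      (if a v = x' then ‖v - η (ω v)‖ ^ 2 - ‖v - a v‖ ^ 2 else 0) := by
    intro x'
    refine Finset.sum_nonneg fun v _ => ?_
    by_cases h : a v = x'
    · rw [if_pos h]
      have := (ha v).2 (η (ω v)) (hη (ω v))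
      linarith
    · rw [if_neg h]
  have hterm2 : ∑ x ∈ H, ∑ x' ∈ insert x (f x),
        ∑ v ∈ D, (if a v = x' then ‖v - η (ω v)‖ ^ 2 - ‖v - a v‖ ^ 2 else 0)
      ≤ ∑ v ∈ D, (‖v - η (ω v)‖ ^ 2 - ‖v - a v‖ ^ 2) := by
    have hAA : (↑H : Set (EuclideanSpace ℝ (Fin l))).PairwiseDisjoint
        (fun x => insert x (f x)) := by
      intro x hx y hy hxy
      rw [Finset.mem_coe] at hx hy
      simp only [Function.onFun]
      rw [Finset.disjoint_left]
      intro z hz hz'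
      rcases Finset.mem_insert.mp hz with rfl | hzf
      · rcases Finset.mem_insert.mp hz' with h' | h'
        · exact hxy h'
        · exact (Finset.mem_sdiff.mp ((hf1 y hy).1 h')).2 hx
      · rcases Finset.mem_insert.mp hz' with h' | h'
        · exact (Finset.mem_sdiff.mp ((hf1 x hx).1 hzf)).2 (h' ▸ hy)
        · exact Finset.disjoint_left.mp (hf2 x hx y hy hxy) hzf h'
    rw [← Finset.sum_biUnion hAA]
    have hsubX : H.biUnion (fun x => insert x (f x)) ⊆ X := by
      intro z hz
      obtain ⟨x, hx, hzx⟩ := Finset.mem_biUnion.mp hz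
      rcases Finset.mem_insert.mp hzx with rfl | h'
      · exact hHX hx
      · exact (Finset.mem_sdiff.mp ((hf1 x hx).1 h')).1
    calc ∑ x' ∈ H.biUnion (fun x => insert x (f x)),
          ∑ v ∈ D, (if a v = x' then ‖v - η (ω v)‖ ^ 2 - ‖v - a v‖ ^ 2 else 0)
        ≤ ∑ x' ∈ X, ∑ v ∈ D,
            (if a v = x' then ‖v - η (ω v)‖ ^ 2 - ‖v - a v‖ ^ 2 else 0) :=
          Finset.sum_le_sum_of_subset_of_nonneg hsubX (fun x' _ _ => hg2nonneg x')
      _ = ∑ v ∈ D, (‖v - η (ω v)‖ ^ 2 - ‖v - a v‖ ^ 2) := by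
          rw [← km_sum_ind D X a (fun v => ‖v - η (ω v)‖ ^ 2 - ‖v - a v‖ ^ 2)]
          exact Finset.sum_congr rfl fun v hv => if_pos (ha v).1
  -- bound total loss via centroids
  set P : ℝ := ∑ v ∈ D, ‖v - μf (ω v)‖ ^ 2 with hPdef
  set Q : ℝ := ∑ v ∈ D, ‖v - μf (ω v)‖ * ‖v - a v‖ with hQdef
  have hfib : ∀ (F : EuclideanSpace ℝ (Fin l) → ℝ),
      ∑ o ∈ O, ∑ v ∈ D.filter (fun v => ω v = o), F v = ∑ v ∈ D, F v :=
    fun F => Finset.sum_fiberwise_of_maps_to (fun v hv => (hω v).1) F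
  have hloss : ∑ v ∈ D, (‖v - η (ω v)‖ ^ 2 - ‖v - a v‖ ^ 2) ≤ 2 * P + 2 * Q := by
    rw [← hfib (fun v => ‖v - η (ω v)‖ ^ 2 - ‖v - a v‖ ^ 2)]
    have hPQ : 2 * P + 2 * Q
        = ∑ o ∈ O, (2 * ∑ v ∈ D.filter (fun v => ω v = o), ‖v - μf (ω v)‖ ^ 2
            + 2 * ∑ v ∈ D.filter (fun v => ω v = o), ‖v - μf (ω v)‖ * ‖v - a v‖) := by
      rw [Finset.sum_add_distrib, ← Finset.mul_sum, ← Finset.mul_sum,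
        hfib (fun v => ‖v - μf (ω v)‖ ^ 2), hfib (fun v => ‖v - μf (ω v)‖ * ‖v - a v‖)]
    rw [hPQ]
    refine Finset.sum_le_sum fun o ho => ?_
    have hcongr1 : ∑ v ∈ D.filter (fun v => ω v = o), (‖v - η (ω v)‖ ^ 2 - ‖v - a v‖ ^ 2)
        = ∑ v ∈ D.filter (fun v => ω v = o), (‖v - η o‖ ^ 2 - ‖v - a v‖ ^ 2) := by
      refine Finset.sum_congr rfl fun v hv => ?_
      rw [(Finset.mem_filter.mp hv).2]
    have hcongr2 : ∑ v ∈ D.filter (fun v => ω v = o), ‖v - μf (ω v)‖ ^ 2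
        = ∑ v ∈ D.filter (fun v => ω v = o), ‖v - μf o‖ ^ 2 := by
      refine Finset.sum_congr rfl fun v hv => ?_
      rw [(Finset.mem_filter.mp hv).2]
    have hcongr3 : ∑ v ∈ D.filter (fun v => ω v = o), ‖v - μf (ω v)‖ * ‖v - a v‖
        = ∑ v ∈ D.filter (fun v => ω v = o), ‖v - μf o‖ * ‖v - a v‖ := by
      refine Finset.sum_congr rfl fun v hv => ?_
      rw [(Finset.mem_filter.mp hv).2]
    rw [hcongr1, hcongr2, hcongr3]
    by_cases hNo : (D.filter (fun v => ω v = o)).Nonempty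
    · have hμo : μf o = ((D.filter (fun v => ω v = o)).card : ℝ)⁻¹
          • ∑ w ∈ D.filter (fun v => ω v = o), w := by
        rw [hμf]; exact dif_pos hNo
      have := km_cluster_loss (D.filter (fun v => ω v = o)) X hNo a ha (μf o) hμo
      have hηo : η o = a (μf o) := rfl
      rw [hηo]
      exact this
    · rw [Finset.not_nonempty_iff_eq_empty.mp hNo]
      simp
  have hPS : P ≤ kmeansCost D O := by
    rw [hPdef, ← hfib (fun v => ‖v - μf (ω v)‖ ^ 2), hS,
      ← hfib (fun v => ‖v - ω v‖ ^ 2)]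
    refine Finset.sum_le_sum fun o ho => ?_
    have hcongr2 : ∑ v ∈ D.filter (fun v => ω v = o), ‖v - μf (ω v)‖ ^ 2
        = ∑ v ∈ D.filter (fun v => ω v = o), ‖v - μf o‖ ^ 2 := by
      refine Finset.sum_congr rfl fun v hv => ?_
      rw [(Finset.mem_filter.mp hv).2]
    have hcongr4 : ∑ v ∈ D.filter (fun v => ω v = o), ‖v - ω v‖ ^ 2
        = ∑ v ∈ D.filter (fun v => ω v = o), ‖v - o‖ ^ 2 := by
      refine Finset.sum_congr rfl fun v hv => ?_
      rw [(Finset.mem_filter.mp hv).2]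
    rw [hcongr2, hcongr4]
    by_cases hNo : (D.filter (fun v => ω v = o)).Nonempty
    · have hμo : μf o = ((D.filter (fun v => ω v = o)).card : ℝ)⁻¹
          • ∑ w ∈ D.filter (fun v => ω v = o), w := by
        rw [hμf]; exact dif_pos hNo
      exact km_cluster_S (D.filter (fun v => ω v = o)) hNo o (μf o) hμo
    · rw [Finset.not_nonempty_iff_eq_empty.mp hNo]
      simp
  have hP0 : 0 ≤ P := Finset.sum_nonneg fun v _ => by positivity
  have hQ0 : 0 ≤ Q := Finset.sum_nonneg fun v _ =>
    mul_nonneg (norm_nonneg _) (norm_nonneg _)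
  have hQsq : Q ^ 2 ≤ P * kmeansCost D X := by
    rw [hT, hQdef, hPdef]
    exact Finset.sum_mul_sq_le_sq_mul_sq D (fun v => ‖v - μf (ω v)‖)
      (fun v => ‖v - a v‖)
  -- abbreviations for the final algebra
  set u : ℝ := Real.sqrt (kmeansCost D X) with hu
  set r : ℝ := Real.sqrt (kmeansCost D O) with hr
  have hu2 : u ^ 2 = kmeansCost D X := Real.sq_sqrt hT0
  have hr2 : r ^ 2 = kmeansCost D O := Real.sq_sqrt hS0
  have hu0 : 0 ≤ u := Real.sqrt_nonneg _
  have hr0 : 0 ≤ r := Real.sqrt_nonneg _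
  have hQru : Q ≤ r * u := by
    have h1 : Q ^ 2 ≤ kmeansCost D O * kmeansCost D X :=
      le_trans hQsq (mul_le_mul_of_nonneg_right hPS hT0)
    have h2 : Q ≤ Real.sqrt (kmeansCost D O * kmeansCost D X) :=
      (Real.le_sqrt hQ0 (mul_nonneg hS0 hT0)).mpr h1
    rwa [Real.sqrt_mul hS0, ← hu, ← hr] at h2
  -- assemble the master inequality
  have hc0 : (0:ℝ) ≤ 1 + 1/(p:ℝ) := by positivity
  have hmaster : -((1 + (1 - ε) / (3 + 2 / (p:ℝ))) * (ε / (k:ℝ))) * (k:ℝ) * kmeansCost D X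
      ≤ (kmeansCost D O - kmeansCost D X)
        + (1 + 1/(p:ℝ)) * (2 * kmeansCost D O + 2 * (r * u)) := by
    rw [← hLHS]
    refine le_trans hsummed ?_
    rw [hsplit, hterm1]
    have hloss2 : ∑ x ∈ H, ∑ x' ∈ insert x (f x),
          ∑ v ∈ D, (if a v = x' then ‖v - η (ω v)‖ ^ 2 - ‖v - a v‖ ^ 2 else 0)
        ≤ 2 * kmeansCost D O + 2 * (r * u) := by
      refine le_trans hterm2 (le_trans hloss ?_)
      linarith [hPS, hQru]
    have := mul_le_mul_of_nonneg_left hloss2 hc0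
    linarith
  -- final algebra
  set s : ℝ := 3 + 2 / (p:ℝ) with hsdef
  have hs3 : 3 < s := by
    have : (0:ℝ) < 2/(p:ℝ) := by positivity
    rw [hsdef]; linarith
  have hs0 : (0:ℝ) < s := by linarith
  have hsne : s ≠ 0 := ne_of_gt hs0
  have h1ε : (0:ℝ) < 1 - ε := by linarith
  have hcs : 1 + 1/(p:ℝ) = (s - 1)/2 := by
    rw [hsdef]; ring
  have hkk : (ε / (k:ℝ)) * (k:ℝ) = ε := by
    field_simp
  have hmain2 : (1 - (1 + (1-ε)/s) * ε) * u^2 ≤ s * r^2 + (s-1) * (r*u) := by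
    rw [hu2, hr2]
    have e1 : -((1 + (1 - ε) / s) * (ε / (k:ℝ))) * (k:ℝ) * kmeansCost D X
        = -((1 + (1 - ε) / s) * ε) * kmeansCost D X := by
      field_simp
    rw [e1] at hmaster
    rw [hcs] at hmaster
    nlinarith [hmaster]
  have hfinalg := km_algebra ε s u r hε0 hε1 hs3 hu0 hr0 hmain2
  -- conclude
  rw [hu2, hr2] at hfinalg
  exact hfinalg
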